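/- Let T be a finite set of all p-tuples of pairwise distinct elements of [m] (m ≥ p), and let a, b : [m]^p → ℝ≥0 vanish on tuples with a repeated coordinate. For σ ∈ S_m let f_σ act coordinatewise on [m]^p and D_σ = Σ_{j ∈ [m]^p} a(j) b(f_σ(j)). Then there exists σ' ∈ S_m with D_{σ'} ≤ (Σ_j a(j))(Σ_j b(j)) / ∏_{i=0}^{p-1}(m-i). -/

import Mathlib

open SimpleGraph

/-- An `m`-fold cover of a graph `G`, with lists canonically labeled by `Fin m`. -/
structure DPCover {V : Type} (G : SimpleGraph V) (m : ℕ) where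
  H : SimpleGraph (V × Fin m)
  part_complete : ∀ (v : V) (a b : Fin m), a ≠ b → H.Adj (v, a) (v, b)
  cross : ∀ (u v : V) (a b : Fin m), u ≠ v → H.Adj (u, a) (v, b) → G.Adj u v
  matching_right : ∀ (u v : V) (a b b' : Fin m), u ≠ v →
    H.Adj (u, a) (v, b) → H.Adj (u, a) (v, b') → b = b'
  matching_left : ∀ (u v : V) (a a' b : Fin m), u ≠ v →
    H.Adj (u, a) (v, b) → H.Adj (u, a') (v, b) → a = a'

/-- A cover is full if every matching between lists of adjacent vertices is perfect. -/
def DPCover.IsFull {V : Type} {G : SimpleGraph V} {m : ℕ} (C : DPCover G m) : Prop :=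
  ∀ u v : V, G.Adj u v → ∀ a : Fin m, ∃ b : Fin m, C.H.Adj (u, a) (v, b)

/-- An `H`-coloring: a choice of one list element per vertex forming an independent set. -/
def DPCover.IsColoring {V : Type} {G : SimpleGraph V} {m : ℕ} (C : DPCover G m)
    (c : V → Fin m) : Prop :=
  ∀ u v : V, ¬ C.H.Adj (u, c u) (v, c v)

/-- The number of `H`-colorings of `G` with respect to the cover `C`. -/
noncomputable def dpCount {V : Type} {G : SimpleGraph V} {m : ℕ} (C : DPCover G m) : ℕ :=
  Nat.card {c : V → Fin m // C.IsColoring c}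

/-- `N(P, C)`: the number of `H`-colorings containing the set `P` of cover vertices. -/
noncomputable def NCount {V : Type} {G : SimpleGraph V} {m : ℕ} (C : DPCover G m)
    (P : Set (V × Fin m)) : ℕ :=
  Nat.card {c : V → Fin m // C.IsColoring c ∧ ∀ p ∈ P, c p.1 = p.2}

/-- The DP color function: minimum number of colorings over all `m`-fold covers. -/
noncomputable def PDP {V : Type} (G : SimpleGraph V) (m : ℕ) : ℕ :=
  sInf {n : ℕ | ∃ C : DPCover G m, dpCount C = n}

/-- The number of proper `m`-colorings (the chromatic polynomial evaluated at `m`). -/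
noncomputable def properCount {V : Type} (G : SimpleGraph V) (m : ℕ) : ℕ :=
  Nat.card {c : V → Fin m // ∀ u v : V, G.Adj u v → c u ≠ c v}

/-- A cover has a canonical labeling if lists can be renamed so all cross edges are
`(u,j)(v,j)`. -/
def DPCover.HasCanonicalLabeling {V : Type} {G : SimpleGraph V} {m : ℕ}
    (C : DPCover G m) : Prop :=
  ∃ σ : V → Equiv.Perm (Fin m), ∀ u v : V, G.Adj u v → ∀ j : Fin m,
    C.H.Adj (u, σ u j) (v, σ v j)

section Aux

open Finset

private lemma exists_perm_comp_aux {p m : ℕ} {j₁ j₂ : Fin p → Fin m}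
    (h1 : Function.Injective j₁) (h2 : Function.Injective j₂) :
    ∃ τ : Equiv.Perm (Fin m), τ ∘ j₁ = j₂ := by
  classical
  let e : {x : Fin m // x ∈ Set.range j₁} ≃ {x : Fin m // x ∈ Set.range j₂} :=
    (Equiv.ofInjective j₁ h1).symm.trans (Equiv.ofInjective j₂ h2)
  have hcard : Fintype.card {x : Fin m // x ∉ Set.range j₁} =
      Fintype.card {x : Fin m // x ∉ Set.range j₂} := by
    simp only [Fintype.card_subtype_compl]
    congr 1
    exact (Fintype.card_congr (Equiv.ofInjective j₁ h1).symm).trans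
      (Fintype.card_congr (Equiv.ofInjective j₂ h2))
  let f : {x : Fin m // x ∉ Set.range j₁} ≃ {x : Fin m // x ∉ Set.range j₂} :=
    Fintype.equivOfCardEq hcard
  refine ⟨Equiv.subtypeCongr e f, funext fun i => ?_⟩
  have hmem : j₁ i ∈ Set.range j₁ := ⟨i, rfl⟩
  have happ : Equiv.subtypeCongr e f (j₁ i) = (e ⟨j₁ i, hmem⟩ : Fin m) := by
    simp [Equiv.subtypeCongr, Equiv.sumCompl_symm_apply_of_pos (p := (· ∈ Set.range j₁)) hmem]
  rw [Function.comp_apply, happ]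
  show ((Equiv.ofInjective j₂ h2) ((Equiv.ofInjective j₁ h1).symm ⟨j₁ i, hmem⟩) : Fin m) = j₂ i
  have : (⟨j₁ i, hmem⟩ : {x : Fin m // x ∈ Set.range j₁}) = Equiv.ofInjective j₁ h1 i := rfl
  rw [this, Equiv.symm_apply_apply]
  rfl

end Aux

theorem exists_perm_avg_le_general {m p : ℕ} (hp : p ≤ m)
    (a b : (Fin p → Fin m) → ℝ)
    (ha : ∀ j, 0 ≤ a j) (hb : ∀ j, 0 ≤ b j)
    (hza : ∀ j, ¬ Function.Injective j → a j = 0)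
    (hzb : ∀ j, ¬ Function.Injective j → b j = 0) :
    ∃ σ : Equiv.Perm (Fin m),
      (∑ j : Fin p → Fin m, a j * b (σ ∘ j)) ≤
        (∑ j : Fin p → Fin m, a j) * (∑ j : Fin p → Fin m, b j) /
          ∏ i ∈ Finset.range p, ((m : ℝ) - i) := by

  classical
  set A := ∑ j : Fin p → Fin m, a j with hA
  set Bs := ∑ j : Fin p → Fin m, b j with hBs
  -- composing with a fixed permutation permutes all tuples
  have hcomp : ∀ σ : Equiv.Perm (Fin m), ∑ j : Fin p → Fin m, b (σ ∘ j) = Bs := by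
    intro σ
    exact Fintype.sum_equiv ((Equiv.refl (Fin p)).arrowCongr σ) (fun j => b (σ ∘ j)) b
      (fun j => by congr 1)
  -- base tuple
  have hm0 : Function.Injective (Fin.castLE hp) := Fin.castLE_injective hp
  set j₀ : Fin p → Fin m := Fin.castLE hp with hj₀
  set B0 := ∑ σ : Equiv.Perm (Fin m), b (σ ∘ j₀) with hB0
  -- translation invariance
  have key : ∀ j : Fin p → Fin m, Function.Injective j → ∑ σ : Equiv.Perm (Fin m), b (σ ∘ j) = B0 := by
    intro j hj
    obtain ⟨τ, hτ⟩ := exists_perm_comp_aux hm0 hj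
    rw [hB0]
    refine Fintype.sum_bijective (fun σ => σ * τ) (Equiv.mulRight τ).bijective _ _ ?_
    intro σ
    have : (σ * τ) ∘ j₀ = σ ∘ j := by
      rw [Equiv.Perm.coe_mul, Function.comp_assoc, hτ]
    rw [this]
  -- injective tuples
  set s : Finset (Fin p → Fin m) := Finset.univ.filter (fun j => Function.Injective j) with hs
  have hsum_s : ∀ σ : Equiv.Perm (Fin m), ∑ j ∈ s, b (σ ∘ j) = Bs := by
    intro σ
    rw [← hcomp σ]
    refine Finset.sum_subset (Finset.filter_subset _ _) ?_
    intro j _ hjs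
    apply hzb
    intro hinj
    exact hjs (Finset.mem_filter.mpr ⟨Finset.mem_univ _, fun x y hxy =>
      hinj (by simp [Function.comp, hxy])⟩)
  have hcards : s.card = m.descFactorial p := by
    rw [hs, ← Fintype.card_subtype]
    rw [Fintype.card_congr (Equiv.subtypeInjectiveEquivEmbedding (Fin p) (Fin m))]
    rw [Fintype.card_embedding_eq, Fintype.card_fin, Fintype.card_fin]
  have hdesc_ne : m.descFactorial p ≠ 0 := by
    rw [Ne, Nat.descFactorial_eq_zero_iff_lt]
    omega
  have hfact : Fintype.card (Equiv.Perm (Fin m)) = m.factorial := by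
    rw [Fintype.card_perm, Fintype.card_fin]
  -- count B0
  have hB0count : (m.descFactorial p : ℝ) * B0 = (m.factorial : ℝ) * Bs := by
    have h1 : ∑ j ∈ s, ∑ σ : Equiv.Perm (Fin m), b (σ ∘ j) = (s.card : ℝ) * B0 := by
      rw [Finset.sum_congr rfl (fun j hj => key j (Finset.mem_filter.mp hj).2),
        Finset.sum_const, nsmul_eq_mul]
    have h2 : ∑ σ : Equiv.Perm (Fin m), ∑ j ∈ s, b (σ ∘ j) = (m.factorial : ℝ) * Bs := by
      rw [Finset.sum_congr rfl (fun σ _ => hsum_s σ), Finset.sum_const, nsmul_eq_mul,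
        Finset.card_univ, hfact]
    rw [← hcards, ← h1, Finset.sum_comm, h2]
  -- total sum
  have htotal : ∑ σ : Equiv.Perm (Fin m), ∑ j : Fin p → Fin m, a j * b (σ ∘ j) = A * B0 := by
    rw [Finset.sum_comm]
    have : ∀ j : Fin p → Fin m, ∑ σ : Equiv.Perm (Fin m), a j * b (σ ∘ j) = a j * B0 := by
      intro j
      rw [← Finset.mul_sum]
      by_cases hj : Function.Injective j
      · rw [key j hj]
      · rw [hza j hj, zero_mul, zero_mul]
    rw [Finset.sum_congr rfl (fun j _ => this j), ← Finset.sum_mul]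
  -- product identity
  have hprod : ∏ i ∈ Finset.range p, ((m : ℝ) - i) = (m.descFactorial p : ℝ) := by
    rw [Nat.descFactorial_eq_prod_range, Nat.cast_prod]
    refine Finset.prod_congr rfl fun i hi => ?_
    rw [Nat.cast_sub (le_of_lt (lt_of_lt_of_le (Finset.mem_range.mp hi) hp))]
  -- positivity
  have hK : (0:ℝ) < (m.descFactorial p : ℝ) := by
    exact_mod_cast Nat.pos_of_ne_zero hdesc_ne
  have hM : (0:ℝ) < (m.factorial : ℝ) := by exact_mod_cast m.factorial_pos
  have hAnn : 0 ≤ A := Finset.sum_nonneg fun j _ => ha j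
  -- average argument
  have havg : ∃ σ : Equiv.Perm (Fin m), (∑ j : Fin p → Fin m, a j * b (σ ∘ j)) ≤ A * B0 / (m.factorial : ℝ) := by
    have hne : (Finset.univ : Finset (Equiv.Perm (Fin m))).Nonempty := Finset.univ_nonempty
    have hle : ∑ σ : Equiv.Perm (Fin m), ∑ j : Fin p → Fin m, a j * b (σ ∘ j) ≤
        ∑ _σ : Equiv.Perm (Fin m), A * B0 / (m.factorial : ℝ) := by
      rw [htotal, Finset.sum_const, nsmul_eq_mul, Finset.card_univ, hfact]
      refine le_of_eq ?_
      field_simp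
    obtain ⟨σ, _, hσ⟩ := Finset.exists_le_of_sum_le hne hle
    exact ⟨σ, hσ⟩
  obtain ⟨σ, hσ⟩ := havg
  refine ⟨σ, hσ.trans ?_⟩
  rw [hprod]
  have hB0' : B0 = (m.factorial : ℝ) * Bs / (m.descFactorial p : ℝ) := by
    field_simp
    linarith [hB0count]
  rw [hB0']
  refine le_of_eq ?_
  field_simp
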